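/- Let I be a closed unbounded set of ordinals and let B ⊆ I be a suitable set. If β ∈ B and β' is the successor of β in B (that is, β' = min(B ∖ (β+1)), assumed to exist), then either β' is the least element of I above β (β' = min(I ∖ (β+1))), or else β' is a limit point of I of uncountable cofinality. -/

import Mathlib

open Set

noncomputable section

/-- `l` is a limit point of the set `S` of ordinals: `l > 0` and `sup (S ∩ l) = l`. -/
def IsLimitPoint (S : Set Ordinal) (l : Ordinal) : Prop :=
  0 < l ∧ sSup (S ∩ Iio l) = l

/-- A set of ordinals is closed if it contains all of its limit points. -/
def IsClosedSet (S : Set Ordinal) : Prop :=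
  ∀ l, IsLimitPoint S l → l ∈ S

/-- A set of ordinals is unbounded (in the class of all ordinals). -/
def IsUnboundedSet (S : Set Ordinal) : Prop :=
  ∀ a, ∃ b ∈ S, a < b

/-- `B` is a suitable subset of `I`: it is a countable closed subset of `I`, every member of `B`
which is a limit point of `I` of countable cofinality is a limit point of `B`, and `B` is closed
under immediate predecessors in `I`. -/
def Suitable (I B : Set Ordinal) : Prop :=
  B ⊆ I ∧ B.Countable ∧ IsClosedSet B ∧
  (∀ β ∈ B, IsLimitPoint I β → β.cof ≤ Cardinal.aleph0 → IsLimitPoint B β) ∧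
  (∀ β ∈ B, ∀ m, IsGreatest (I ∩ Iio β) m → m ∈ B)

/-- If `B ⊆ I` is suitable and `β'` is the successor of `β` in `B`, then either `β'` is the
least element of `I` above `β`, or `β'` is a limit point of `I` of uncountable cofinality. -/
theorem stmt0 (I B : Set Ordinal) (hIcl : IsClosedSet I) (hIunb : IsUnboundedSet I)
    (hB : Suitable I B) (β β' : Ordinal) (hβ : β ∈ B)
    (hβ' : IsLeast (B ∩ Ioi β) β') :
    IsLeast (I ∩ Ioi β) β' ∨ (IsLimitPoint I β' ∧ Cardinal.aleph0 < β'.cof) := by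

  obtain ⟨⟨hβ'B, hβ'gt⟩, hβ'lb⟩ := hβ'
  obtain ⟨hBI, -, -, hlimB, hpred⟩ := hB
  have hβ'I : β' ∈ I := hBI hβ'B
  -- least element of I above β
  have hne : (I ∩ Ioi β).Nonempty := by
    obtain ⟨b, hb, hab⟩ := hIunb β
    exact ⟨b, hb, hab⟩
  obtain ⟨m, hmS, hmin⟩ := wellFounded_lt.has_min (I ∩ Ioi β) hne
  have hm_least : IsLeast (I ∩ Ioi β) m := ⟨hmS, fun x hx => not_lt.mp (hmin x hx)⟩
  have hmβ' : m ≤ β' := hm_least.2 ⟨hβ'I, hβ'gt⟩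
  rcases eq_or_lt_of_le hmβ' with heq | hlt
  · left; rwa [heq] at hm_least
  · right
    have hm0 : 0 < m := lt_of_le_of_lt (zero_le (a := β)) hmS.2
    have hβ'0 : 0 < β' := hm0.trans hlt
    set S : Set Ordinal := I ∩ Iio β' with hS
    have hSne : S.Nonempty := ⟨m, hmS.1, hlt⟩
    have hSbdd : BddAbove S := ⟨β', fun x hx => le_of_lt hx.2⟩
    have hsle : sSup S ≤ β' := csSup_le hSne fun x hx => le_of_lt hx.2
    have hms : m ≤ sSup S := le_csSup hSbdd ⟨hmS.1, hlt⟩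
    have hlim : IsLimitPoint I β' := by
      refine ⟨hβ'0, ?_⟩
      by_contra hne'
      have hslt : sSup S < β' := lt_of_le_of_ne hsle hne'
      have hsI : sSup S ∈ I := by
        by_cases hmem : sSup S ∈ S
        · exact hmem.1
        · apply hIcl
          refine ⟨lt_of_lt_of_le hm0 hms, ?_⟩
          have hsub : I ∩ Iio (sSup S) = S := by
            apply Set.Subset.antisymm
            · exact fun x hx => ⟨hx.1, hx.2.trans hslt⟩
            · intro x hx
              refine ⟨hx.1, lt_of_le_of_ne (le_csSup hSbdd hx) ?_⟩
              rintro rfl; exact hmem hx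
          rw [hsub]
      have hgr : IsGreatest S (sSup S) := ⟨⟨hsI, hslt⟩, fun x hx => le_csSup hSbdd hx⟩
      have hsB : sSup S ∈ B := hpred β' hβ'B (sSup S) hgr
      have : β' ≤ sSup S := hβ'lb ⟨hsB, lt_of_lt_of_le hmS.2 hms⟩
      exact absurd hslt (not_lt.mpr this)
    refine ⟨hlim, ?_⟩
    by_contra hcof
    have hcof' : β'.cof ≤ Cardinal.aleph0 := not_lt.mp hcof
    obtain ⟨-, hsupB⟩ := hlimB β' hβ'B hlim hcof'
    have hsub : B ∩ Iio β' ⊆ Iic β := by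
      intro x hx
      by_contra hxβ
      exact absurd hx.2 (not_lt.mpr (hβ'lb ⟨hx.1, not_le.mp (show ¬ x ≤ β from hxβ)⟩))
    have : sSup (B ∩ Iio β') ≤ β := csSup_le ⟨β, hβ, hβ'gt⟩ fun x hx => hsub hx
    rw [hsupB] at this
    exact absurd hβ'gt (not_lt.mpr this)
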